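/- Let π be any policy such that (i) for every stage t ≥ 1 and every s ∈ S, a ∈ A(s) with d_t(s,a) > 0, one has x*_s = Σ_{s'∈S} P(s,a,s') · x*_{s'}, and (ii) ξ^π(s,a) < ∞ for every s ∈ S_r and a ∈ A(s). Then Pr^π(◇B) = x*_{s0}; that is, any policy that uses only actions conserving the optimal reachability probabilities and has finite expected residence times in all state–action pairs of S_r maximizes the probability of reaching B. -/

import Mathlib

open scoped ENNReal

section

variable {S A : Type} [Fintype S] [Fintype A] [DecidableEq S] [DecidableEq A]

/-- A policy: a sequence of decision rules, each supported on the available actions. -/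
def IsPolicy (avail : S → Finset A) (π : ℕ → S → A → ℝ) : Prop :=
  ∀ t s, (∀ a, 0 ≤ π t s a) ∧ (∀ a, a ∉ avail s → π t s a = 0) ∧
    (∑ a ∈ avail s, π t s a) = 1

/-- A stationary policy uses the same decision rule at every stage. -/
def IsStationaryPolicy (π : ℕ → S → A → ℝ) : Prop := ∀ t, π t = π 0

/-- Occupancy measures: `occ P avail init π t s a` is `μ^π_{t+1}(s,a)` (stages indexed from 1). -/
def occ (P : S → A → S → ℝ) (avail : S → Finset A) (init : S)
    (π : ℕ → S → A → ℝ) : ℕ → S → A → ℝ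
  | 0 => fun s a => if s = init then π 0 s a else 0
  | t + 1 => fun s' a' =>
      π (t + 1) s' a' * ∑ s : S, ∑ a ∈ avail s, P s a s' * occ P avail init π t s a

/-- Expected residence time `ξ^π(s,a) ∈ [0,∞]`. -/
noncomputable def resTime (P : S → A → S → ℝ) (avail : S → Finset A) (init : S)
    (π : ℕ → S → A → ℝ) (s : S) (a : A) : ℝ≥0∞ :=
  ∑' t : ℕ, ENNReal.ofReal (occ P avail init π t s a)

/-- Probability of reaching the absorbing set `B`. -/
noncomputable def reachProb (P : S → A → S → ℝ) (avail : S → Finset A) (B : Finset S)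
    (init : S) (π : ℕ → S → A → ℝ) : ℝ≥0∞ :=
  ⨆ t : ℕ, ∑ s ∈ B, ∑ a ∈ avail s, ENNReal.ofReal (occ P avail init π t s a)

/-- `x*_s`: optimal probability of reaching `B` starting from `s`. -/
noncomputable def xstar (P : S → A → S → ℝ) (avail : S → Finset A) (B : Finset S)
    (s : S) : ℝ≥0∞ :=
  ⨆ π : {π : ℕ → S → A → ℝ // IsPolicy avail π}, reachProb P avail B s π.1

/-- A state is absorbing if every available action loops on it with probability 1. -/
def Absorbing (P : S → A → S → ℝ) (avail : S → Finset A) (s : S) : Prop :=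
  ∀ a ∈ avail s, P s a s = 1

/-- Expected total cost `f_c(π) ∈ [0,∞]`. -/
noncomputable def totalCost (P : S → A → S → ℝ) (avail : S → Finset A) (init : S)
    (c : S → A → ℝ) (π : ℕ → S → A → ℝ) : ℝ≥0∞ :=
  ∑ s : S, ∑ a ∈ avail s, resTime P avail init π s a * ENNReal.ofReal (c s a)


set_option linter.unusedSectionVars false

open Filter Topology

lemma occ_nonneg (P : S → A → S → ℝ) (avail : S → Finset A) (init : S)
    (π : ℕ → S → A → ℝ) (hπ : IsPolicy avail π) (hP0 : ∀ s a s', 0 ≤ P s a s') :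
    ∀ t s a, 0 ≤ occ P avail init π t s a := by
  intro t
  induction t with
  | zero =>
    intro s a
    simp only [occ]
    split
    · exact (hπ 0 s).1 a
    · exact le_refl 0
  | succ t ih =>
    intro s a
    exact mul_nonneg ((hπ _ _).1 a) (Finset.sum_nonneg fun s' _ =>
      Finset.sum_nonneg fun a' _ => mul_nonneg (hP0 _ _ _) (ih _ _))

lemma occ_total (P : S → A → S → ℝ) (avail : S → Finset A) (init : S)
    (π : ℕ → S → A → ℝ) (hπ : IsPolicy avail π)
    (hP1 : ∀ s, ∀ a ∈ avail s, (∑ s' : S, P s a s') = 1) :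
    ∀ t, (∑ s : S, ∑ a ∈ avail s, occ P avail init π t s a) = 1 := by
  intro t
  induction t with
  | zero =>
    simp only [occ]
    rw [Finset.sum_eq_single init]
    · simp [(hπ 0 init).2.2]
    · intro s _ hs
      simp [hs]
    · simp
  | succ t ih =>
    simp only [occ]
    have : ∀ s' : S, (∑ a' ∈ avail s', π (t + 1) s' a' *
        ∑ s : S, ∑ a ∈ avail s, P s a s' * occ P avail init π t s a)
        = ∑ s : S, ∑ a ∈ avail s, P s a s' * occ P avail init π t s a := by
      intro s'
      rw [← Finset.sum_mul, (hπ (t+1) s').2.2, one_mul]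
    rw [Finset.sum_congr rfl fun s' _ => this s']
    rw [Finset.sum_comm]
    have : ∀ s : S, (∑ s' : S, ∑ a ∈ avail s, P s a s' * occ P avail init π t s a)
        = ∑ a ∈ avail s, occ P avail init π t s a := by
      intro s
      rw [Finset.sum_comm]
      refine Finset.sum_congr rfl fun a ha => ?_
      rw [← Finset.sum_mul, hP1 s a ha, one_mul]
    rw [Finset.sum_congr rfl fun s _ => this s, ih]

lemma reach_le_one (P : S → A → S → ℝ) (avail : S → Finset A) (B : Finset S) (init : S)
    (π : ℕ → S → A → ℝ) (hπ : IsPolicy avail π) (hP0 : ∀ s a s', 0 ≤ P s a s')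
    (hP1 : ∀ s, ∀ a ∈ avail s, (∑ s' : S, P s a s') = 1) :
    reachProb P avail B init π ≤ 1 := by
  refine iSup_le fun t => ?_
  have hnn := occ_nonneg P avail init π hπ hP0
  calc ∑ s ∈ B, ∑ a ∈ avail s, ENNReal.ofReal (occ P avail init π t s a)
      = ENNReal.ofReal (∑ s ∈ B, ∑ a ∈ avail s, occ P avail init π t s a) := by
        rw [ENNReal.ofReal_sum_of_nonneg fun s _ =>
          Finset.sum_nonneg fun a _ => hnn t s a]
        exact Finset.sum_congr rfl fun s _ =>
          (ENNReal.ofReal_sum_of_nonneg fun a _ => hnn t s a).symm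
    _ ≤ ENNReal.ofReal 1 := by
        refine ENNReal.ofReal_le_ofReal ?_
        calc ∑ s ∈ B, ∑ a ∈ avail s, occ P avail init π t s a
            ≤ ∑ s : S, ∑ a ∈ avail s, occ P avail init π t s a :=
              Finset.sum_le_sum_of_subset_of_nonneg (Finset.subset_univ B)
                (fun s _ _ => Finset.sum_nonneg fun a _ => hnn t s a)
          _ = 1 := occ_total P avail init π hπ hP1 t
    _ = 1 := ENNReal.ofReal_one

lemma xstar_le_one (P : S → A → S → ℝ) (avail : S → Finset A) (B : Finset S) (s : S)
    (hP0 : ∀ s a s', 0 ≤ P s a s')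
    (hP1 : ∀ s, ∀ a ∈ avail s, (∑ s' : S, P s a s') = 1) :
    xstar P avail B s ≤ 1 :=
  iSup_le fun π' => reach_le_one P avail B s π'.1 π'.2 hP0 hP1

lemma xstar_eq_one (P : S → A → S → ℝ) (avail : S → Finset A) (B : Finset S) {s : S}
    (hs : s ∈ B) (π : ℕ → S → A → ℝ) (hπ : IsPolicy avail π)
    (hP0 : ∀ s a s', 0 ≤ P s a s')
    (hP1 : ∀ s, ∀ a ∈ avail s, (∑ s' : S, P s a s') = 1) :
    xstar P avail B s = 1 := by
  refine le_antisymm (xstar_le_one P avail B s hP0 hP1) ?_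
  have h1 : (1 : ℝ≥0∞) ≤ reachProb P avail B s π := by
    refine le_trans ?_ (le_iSup _ 0)
    have : (1 : ℝ≥0∞) ≤ ∑ a ∈ avail s, ENNReal.ofReal (occ P avail s π 0 s a) := by
      have : ∑ a ∈ avail s, ENNReal.ofReal (occ P avail s π 0 s a)
          = ENNReal.ofReal (∑ a ∈ avail s, π 0 s a) := by
        rw [ENNReal.ofReal_sum_of_nonneg fun a _ => (hπ 0 s).1 a]
        refine Finset.sum_congr rfl fun a _ => ?_
        simp [occ]
      rw [this, (hπ 0 s).2.2, ENNReal.ofReal_one]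
    refine le_trans this ?_
    exact Finset.single_le_sum (f := fun s' => ∑ a ∈ avail s',
      ENNReal.ofReal (occ P avail s π 0 s' a)) (fun s' _ => zero_le) hs
  exact le_trans h1 (le_iSup (fun π' : {π : ℕ → S → A → ℝ // IsPolicy avail π} =>
    reachProb P avail B s π'.1) ⟨π, hπ⟩)

set_option maxHeartbeats 1000000 in
/-- Any policy that uses only actions conserving the optimal reachability probabilities and
whose expected residence times in all state–action pairs of `S_r` are finite maximizes the
probability of reaching `B`: `Pr^π(◇B) = x*_{s0}`. -/
theorem conserving_policy_with_finite_residence_is_optimal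
    (P : S → A → S → ℝ) (avail : S → Finset A) (s0 : S) (B : Finset S)
    (havail : ∀ s, (avail s).Nonempty)
    (hP0 : ∀ s a s', 0 ≤ P s a s')
    (hP1 : ∀ s, ∀ a ∈ avail s, (∑ s' : S, P s a s') = 1)
    (habs : ∀ s : S, (s ∈ B ∨ xstar P avail B s = 0) → Absorbing P avail s)
    (hs0B : s0 ∉ B) (hs0r : xstar P avail B s0 ≠ 0)
    (π : ℕ → S → A → ℝ) (hπ : IsPolicy avail π)
    (hcons : ∀ t s, ∀ a ∈ avail s, 0 < π t s a →
      xstar P avail B s = ∑ s' : S, ENNReal.ofReal (P s a s') * xstar P avail B s')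
    (hfin : ∀ s, s ∉ B → xstar P avail B s ≠ 0 → ∀ a ∈ avail s,
      resTime P avail s0 π s a < ⊤) :
    reachProb P avail B s0 π = xstar P avail B s0 := by
  classical
  set x : S → ℝ≥0∞ := xstar P avail B with hxdef
  have hx1 : ∀ s, x s ≤ 1 := fun s => xstar_le_one P avail B s hP0 hP1
  have hxt : ∀ s, x s ≠ ⊤ := fun s => ne_top_of_le_ne_top ENNReal.one_ne_top (hx1 s)
  set y : S → ℝ := fun s => (x s).toReal with hydef
  have hyB : ∀ s ∈ B, y s = 1 := by
    intro s hs
    simp only [hydef, hxdef, xstar_eq_one P avail B hs π hπ hP0 hP1, ENNReal.toReal_one]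
  have hnn := occ_nonneg P avail s0 π hπ hP0
  -- real-valued conservation
  have hconsR : ∀ t s, ∀ a ∈ avail s, 0 < π t s a →
      y s = ∑ s' : S, P s a s' * y s' := by
    intro t s a ha hpos
    have h := hcons t s a ha hpos
    have h2 : (x s).toReal = (∑ s' : S, ENNReal.ofReal (P s a s') * x s').toReal := by
      rw [← h]
    rw [hydef]
    simp only
    rw [h2, ENNReal.toReal_sum (fun s' _ => ENNReal.mul_ne_top ENNReal.ofReal_ne_top (hxt s'))]
    exact Finset.sum_congr rfl fun s' _ => by
      rw [ENNReal.toReal_mul, ENNReal.toReal_ofReal (hP0 s a s')]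
  -- occupancy support
  have hsupp : ∀ t s a, occ P avail s0 π t s a ≠ 0 → 0 < π t s a := by
    intro t s a h
    cases t with
    | zero =>
      simp only [occ] at h
      split at h
      · exact lt_of_le_of_ne ((hπ 0 s).1 a) (Ne.symm h)
      · exact absurd rfl h
    | succ t =>
      simp only [occ] at h
      exact lt_of_le_of_ne ((hπ (t+1) s).1 a) (Ne.symm (left_ne_zero_of_mul h))
  -- conservation of expected value of y
  have hF : ∀ t, (∑ s : S, ∑ a ∈ avail s, occ P avail s0 π t s a * y s) = y s0 := by
    intro t
    induction t with
    | zero =>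
      rw [Finset.sum_eq_single s0]
      · simp only [occ, if_pos rfl, if_true]
        rw [← Finset.sum_mul, (hπ 0 s0).2.2, one_mul]
      · intro s _ hs
        simp [occ, hs]
      · simp
    | succ t ih =>
      have key : ∀ s : S, ∀ a ∈ avail s,
          occ P avail s0 π t s a * ∑ s' : S, P s a s' * y s'
          = occ P avail s0 π t s a * y s := by
        intro s a ha
        by_cases h0 : occ P avail s0 π t s a = 0
        · rw [h0, zero_mul, zero_mul]
        · rw [← hconsR t s a ha (hsupp t s a h0)]
      calc ∑ s' : S, ∑ a' ∈ avail s', occ P avail s0 π (t+1) s' a' * y s'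
          = ∑ s' : S, (∑ s : S, ∑ a ∈ avail s,
              P s a s' * occ P avail s0 π t s a) * y s' := by
            refine Finset.sum_congr rfl fun s' _ => ?_
            simp only [occ]
            rw [← Finset.sum_mul, ← Finset.sum_mul, (hπ (t+1) s').2.2, one_mul]
        _ = ∑ s : S, ∑ a ∈ avail s,
              occ P avail s0 π t s a * ∑ s' : S, P s a s' * y s' := by
            simp only [Finset.sum_mul]
            rw [Finset.sum_comm]
            refine Finset.sum_congr rfl fun s _ => ?_
            rw [Finset.sum_comm]
            refine Finset.sum_congr rfl fun a _ => ?_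
            rw [Finset.mul_sum]
            exact Finset.sum_congr rfl fun s' _ => by ring
        _ = ∑ s : S, ∑ a ∈ avail s, occ P avail s0 π t s a * y s :=
            Finset.sum_congr rfl fun s _ => Finset.sum_congr rfl fun a ha => key s a ha
        _ = y s0 := ih
  -- split into B and complement
  have hsplit : ∀ t, (∑ s ∈ B, ∑ a ∈ avail s, occ P avail s0 π t s a)
      = y s0 - ∑ s ∈ Bᶜ, ∑ a ∈ avail s, occ P avail s0 π t s a * y s := by
    intro t
    have h1 := Finset.sum_add_sum_compl B
      (fun s => ∑ a ∈ avail s, occ P avail s0 π t s a * y s)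
    rw [hF t] at h1
    have h2 : (∑ s ∈ B, ∑ a ∈ avail s, occ P avail s0 π t s a * y s)
        = ∑ s ∈ B, ∑ a ∈ avail s, occ P avail s0 π t s a :=
      Finset.sum_congr rfl fun s hs => Finset.sum_congr rfl fun a _ => by
        rw [hyB s hs, mul_one]
    linarith [h1, h2]
  -- remainder tends to zero
  have hR : Tendsto (fun t => ∑ s ∈ Bᶜ, ∑ a ∈ avail s, occ P avail s0 π t s a * y s)
      atTop (𝓝 0) := by
    have : Tendsto (fun t => ∑ s ∈ Bᶜ, ∑ a ∈ avail s, occ P avail s0 π t s a * y s)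
        atTop (𝓝 (∑ s ∈ Bᶜ, ∑ a ∈ avail s, (0:ℝ))) := by
      refine tendsto_finset_sum _ fun s hs => tendsto_finset_sum _ fun a ha => ?_
      by_cases h0 : x s = 0
      · have hy0 : y s = 0 := by simp [hydef, h0]
        simpa [hy0] using tendsto_const_nhds (α := ℝ) (f := atTop (α := ℕ))
      · have hBc : s ∉ B := Finset.mem_compl.mp hs
        have hfin' := hfin s hBc h0 a ha
        have h1 : Tendsto (fun t => ENNReal.ofReal (occ P avail s0 π t s a)) atTop (𝓝 0) :=
          ENNReal.tendsto_atTop_zero_of_tsum_ne_top hfin'.ne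
        have h2 : Tendsto (fun t => occ P avail s0 π t s a) atTop (𝓝 0) := by
          have h3 := (ENNReal.tendsto_toReal (a := 0) (by simp)).comp h1
          simp only [Function.comp_def, ENNReal.toReal_zero] at h3
          refine h3.congr fun t => ?_
          exact ENNReal.toReal_ofReal (hnn t s a)
        simpa using h2.mul_const (y s)
    simpa using this
  -- limit of the B-mass
  have hG : Tendsto (fun t => ∑ s ∈ B, ∑ a ∈ avail s, occ P avail s0 π t s a)
      atTop (𝓝 (y s0)) := by
    have := (tendsto_const_nhds (x := y s0) (f := atTop (α := ℕ))).sub hR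
    simp only [sub_zero] at this
    exact this.congr fun t => (hsplit t).symm
  -- rewrite reachProb
  have hreach : reachProb P avail B s0 π
      = ⨆ t : ℕ, ENNReal.ofReal (∑ s ∈ B, ∑ a ∈ avail s, occ P avail s0 π t s a) := by
    unfold reachProb
    refine iSup_congr fun t => ?_
    rw [ENNReal.ofReal_sum_of_nonneg fun s _ => Finset.sum_nonneg fun a _ => hnn t s a]
    exact Finset.sum_congr rfl fun s _ =>
      (ENNReal.ofReal_sum_of_nonneg fun a _ => hnn t s a).symm
  refine le_antisymm ?_ ?_
  · exact le_iSup (fun π' : {π : ℕ → S → A → ℝ // IsPolicy avail π} =>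
      reachProb P avail B s0 π'.1) ⟨π, hπ⟩
  · rw [hreach]
    have hten : Tendsto
        (fun t => ENNReal.ofReal (∑ s ∈ B, ∑ a ∈ avail s, occ P avail s0 π t s a))
        atTop (𝓝 (ENNReal.ofReal (y s0))) :=
      (ENNReal.continuous_ofReal.tendsto _).comp hG
    have hx0 : ENNReal.ofReal (y s0) = x s0 := ENNReal.ofReal_toReal (hxt s0)
    rw [← hx0]
    exact le_of_tendsto' hten fun t => le_iSup (fun t => ENNReal.ofReal (∑ s ∈ B, ∑ a ∈ avail s, occ P avail s0 π t s a)) t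


end
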